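/- Let S be a semigroup and let T be a subsemigroup of S of finite Rees index, i.e., the complement S \ T is finite. Then T is a Markov semigroup if and only if S is a Markov semigroup. -/

import Mathlib

open Function

/-- A language is regular if it is accepted by a deterministic finite automaton
with a finite state set. -/
def RegularLang {A : Type} (L : Language A) : Prop :=
  ∃ (Q : Type) (_ : Fintype Q) (M : DFA A Q), M.accepts = L

/-- The product of a nonempty word under the letter-assignment `φ`; the empty
word is sent to `none`. This is the induced map `φ⁺` on nonempty words. -/
def prodPlus {A S : Type} [Semigroup S] (φ : A → S) : List A → Option S
  | [] => none
  | a :: w => some (w.foldl (fun s b => s * φ b) (φ a))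

/-- The induced monoid homomorphism `φ*` from the free monoid of words. -/
def monProd {A M : Type} [Monoid M] (φ : A → M) (w : List A) : M :=
  (w.map φ).prod

/-- A semigroup Markov language for `S` over `A` (with respect to `φ`): a regular,
`+`-prefix-closed language of nonempty words mapping bijectively onto `S` under `φ⁺`. -/
structure IsSgMarkovLang {A S : Type} [Semigroup S] (φ : A → S) (L : Language A) : Prop where
  regular : RegularLang L
  not_empty_mem : [] ∉ L
  plus_prefix_closed : ∀ u v : List A, u ≠ [] → v ≠ [] → u ++ v ∈ L → u ∈ L
  unique_rep : ∀ s : S, ∃! w : List A, w ∈ L ∧ prodPlus φ w = some s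

/-- A robust semigroup Markov language: additionally every word of `L` has minimal
length among (nonempty) words representing the same element. -/
structure IsRobustSgMarkovLang {A S : Type} [Semigroup S] (φ : A → S) (L : Language A)
    extends IsSgMarkovLang φ L : Prop where
  min_length : ∀ w ∈ L, ∀ v : List A, prodPlus φ v = prodPlus φ w → w.length ≤ v.length

/-- A monoid Markov language for `M` over `A` (with respect to `φ`): a regular,
prefix-closed language mapping bijectively onto `M` under `φ*`. -/
structure IsMonMarkovLang {A M : Type} [Monoid M] (φ : A → M) (L : Language A) : Prop where
  regular : RegularLang L
  prefix_closed : ∀ u v : List A, u ++ v ∈ L → u ∈ L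
  unique_rep : ∀ m : M, ∃! w : List A, w ∈ L ∧ monProd φ w = m

/-- A robust monoid Markov language: additionally every word of `L` has minimal
length among words representing the same element. -/
structure IsRobustMonMarkovLang {A M : Type} [Monoid M] (φ : A → M) (L : Language A)
    extends IsMonMarkovLang φ L : Prop where
  min_length : ∀ w ∈ L, ∀ v : List A, monProd φ v = monProd φ w → w.length ≤ v.length

/-- `S` is Markov as a semigroup. -/
def SgMarkov (S : Type) [Semigroup S] : Prop :=
  ∃ (A : Type) (_ : Fintype A) (φ : A → S),
    (∀ s : S, ∃ w : List A, prodPlus φ w = some s) ∧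
    ∃ L : Language A, IsSgMarkovLang φ L

/-- `S` is robustly Markov (as a semigroup) with respect to some alphabet. -/
def SgRobustlyMarkov (S : Type) [Semigroup S] : Prop :=
  ∃ (A : Type) (_ : Fintype A) (φ : A → S),
    (∀ s : S, ∃ w : List A, prodPlus φ w = some s) ∧
    ∃ L : Language A, IsRobustSgMarkovLang φ L

/-- `S` is strongly Markov (as a semigroup). -/
def SgStronglyMarkov (S : Type) [Semigroup S] : Prop :=
  ∀ (A : Type) [Fintype A] (φ : A → S),
    (∀ s : S, ∃ w : List A, prodPlus φ w = some s) →
    ∃ L : Language A, IsRobustSgMarkovLang φ L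

/-- `M` is Markov as a monoid. -/
def MonMarkov (M : Type) [Monoid M] : Prop :=
  ∃ (A : Type) (_ : Fintype A) (φ : A → M),
    Surjective (monProd φ) ∧ ∃ L : Language A, IsMonMarkovLang φ L

/-- `M` is robustly Markov (as a monoid) with respect to some alphabet. -/
def MonRobustlyMarkov (M : Type) [Monoid M] : Prop :=
  ∃ (A : Type) (_ : Fintype A) (φ : A → M),
    Surjective (monProd φ) ∧ ∃ L : Language A, IsRobustMonMarkovLang φ L

/-- `M` is strongly Markov (as a monoid). -/
def MonStronglyMarkov (M : Type) [Monoid M] : Prop :=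
  ∀ (A : Type) [Fintype A] (φ : A → M),
    Surjective (monProd φ) →
    ∃ L : Language A, IsRobustMonMarkovLang φ L

namespace Mk
variable {A S : Type} [Semigroup S]

def pp (φ : A → S) (w : List A) : WithOne S := (w.map fun a => (φ a : WithOne S)).prod

lemma pp_nil (φ : A → S) : pp φ [] = 1 := rfl

lemma pp_cons (φ : A → S) (a : A) (w : List A) : pp φ (a :: w) = (φ a : WithOne S) * pp φ w := by
  simp [pp]

lemma pp_append (φ : A → S) (u v : List A) : pp φ (u ++ v) = pp φ u * pp φ v := by
  simp [pp]

lemma coe_foldl (φ : A → S) (w : List A) (x : S) :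
    ((w.foldl (fun s b => s * φ b) x : S) : WithOne S) = (x : WithOne S) * pp φ w := by
  induction w generalizing x with
  | nil => simp [pp_nil]
  | cons b w ih =>
      rw [List.foldl_cons, ih, pp_cons, ← mul_assoc, ← WithOne.coe_mul]

lemma prodPlus_eq_pp (φ : A → S) (w : List A) : prodPlus φ w = pp φ w := by
  cases w with
  | nil => rfl
  | cons a w =>
      show some _ = _
      have : (some (w.foldl (fun s b => s * φ b) (φ a)) : WithOne S)
          = ((w.foldl (fun s b => s * φ b) (φ a) : S) : WithOne S) := rfl
      rw [this, coe_foldl, pp_cons]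

lemma pp_ne_nil_exists (φ : A → S) {w : List A} (h : w ≠ []) :
    ∃ s : S, pp φ w = (s : WithOne S) := by
  cases w with
  | nil => exact absurd rfl h
  | cons a w =>
      refine ⟨w.foldl (fun s b => s * φ b) (φ a), ?_⟩
      rw [pp_cons, ← coe_foldl]

variable (T : Subsemigroup S) (φ : A → S)

/-- image of `T` inside `WithOne S`. -/
def TT : Set (WithOne S) := (fun s : S => (s : WithOne S)) '' (T : Set S)

lemma one_not_TT : (1 : WithOne S) ∉ TT T := by
  rintro ⟨s, -, hs⟩
  exact WithOne.coe_ne_one hs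

lemma TT_mul {x y : WithOne S} (hx : x ∈ TT T) (hy : y ∈ TT T) : x * y ∈ TT T := by
  obtain ⟨s, hs, rfl⟩ := hx
  obtain ⟨t, ht, rfl⟩ := hy
  exact ⟨s * t, T.mul_mem hs ht, (WithOne.coe_mul s t).symm⟩

lemma ne_nil_of_pp_TT {w : List A} (h : pp φ w ∈ TT T) : w ≠ [] := by
  rintro rfl
  exact one_not_TT T h

/-- greedy block: nonempty, product in `T`, no proper nonempty prefix with product in `T`. -/
def GBlock (b : List A) : Prop :=
  pp φ b ∈ TT T ∧ ∀ j, 1 ≤ j → j < b.length → pp φ (b.take j) ∉ TT T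

lemma GBlock.ne_nil {b : List A} (h : GBlock T φ b) : b ≠ [] := ne_nil_of_pp_TT T φ h.1

/-- a nonempty concatenation of greedy blocks. -/
def GStart (x : List A) : Prop :=
  ∃ gs : List (List A), gs ≠ [] ∧ (∀ g ∈ gs, GBlock T φ g) ∧ gs.flatten = x

/-- final block: product in `T`, and no splitting into (greedy blocks) ++ (word with product in T). -/
def FinBlock (b : List A) : Prop :=
  pp φ b ∈ TT T ∧ ∀ x y : List A, y ≠ [] → b = x ++ y → GStart T φ x → pp φ y ∉ TT T

lemma FinBlock.ne_nil {b : List A} (h : FinBlock T φ b) : b ≠ [] := ne_nil_of_pp_TT T φ h.1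

lemma TT_flatten {gs : List (List A)} (hne : gs ≠ []) (h : ∀ g ∈ gs, pp φ g ∈ TT T) :
    pp φ gs.flatten ∈ TT T := by
  induction gs with
  | nil => exact absurd rfl hne
  | cons g gs ih =>
      rcases eq_or_ne gs [] with rfl | h2
      · simpa [pp_append] using h g (by simp)
      · rw [List.flatten_cons, pp_append]
        exact TT_mul T (h g (by simp)) (ih h2 (fun g hg => h g (by simp [hg])))

lemma gblock_prefix_unique {g g' s s' : List A} (hg : GBlock T φ g) (hg' : GBlock T φ g')
    (h : g ++ s = g' ++ s') : g = g' := by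
  rcases le_total g.length g'.length with hle | hle
  · -- g is a prefix of g'
    have hpre : g = g'.take g.length := by
      have := congrArg (List.take g.length) h
      rwa [List.take_append_of_le_length le_rfl, List.take_append_of_le_length hle,
        List.take_length] at this
    rcases lt_or_eq_of_le hle with hlt | heq
    · exfalso
      have hlen : 1 ≤ g.length := by
        have := hg.ne_nil T φ
        cases g with
        | nil => exact absurd rfl this
        | cons a w => simp
      exact hg'.2 g.length hlen hlt (hpre ▸ hg.1)
    · rw [hpre, heq, List.take_length]
  · have hpre : g' = g.take g'.length := by
      have := congrArg (List.take g'.length) h.symm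
      rwa [List.take_append_of_le_length le_rfl, List.take_append_of_le_length hle,
        List.take_length] at this
    rcases lt_or_eq_of_le hle with hlt | heq
    · exfalso
      have hlen : 1 ≤ g'.length := by
        have := hg'.ne_nil T φ
        cases g' with
        | nil => exact absurd rfl this
        | cons a w => simp
      exact hg.2 g'.length hlen hlt (hpre ▸ hg'.1)
    · rw [hpre, heq, List.take_length]

lemma gblock_finBlock {b : List A} (h : GBlock T φ b) : FinBlock T φ b := by
  refine ⟨h.1, ?_⟩
  rintro x y hy rfl ⟨gs, hgs, hall, rfl⟩ hyT
  -- first block of gs is a nonempty proper prefix of b with product in T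
  obtain ⟨g, gs', rfl⟩ := List.exists_cons_of_ne_nil hgs
  have hgB : GBlock T φ g := hall g (by simp)
  have hgne : g ≠ [] := hgB.ne_nil T φ
  have hlt : g.length < ((g :: gs').flatten ++ y).length := by
    rcases y with _ | _
    · exact absurd rfl hy
    · simp only [List.flatten_cons, List.length_append, List.length_cons]
      omega
  have htake : ((g :: gs').flatten ++ y).take g.length = g := by
    rw [List.flatten_cons, List.append_assoc, List.take_append_of_le_length le_rfl,
      List.take_length]
  have h1 : 1 ≤ g.length := by
    cases g with
    | nil => exact absurd rfl hgne
    | cons _ _ => simp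
  exact h.2 g.length h1 hlt (by rw [htake]; exact hgB.1)

/-- structure uniqueness: two shaped block decompositions of the same word agree. -/
lemma shape_unique : ∀ (gs : List (List A)) (b : List A) (gs' : List (List A)) (b' : List A),
    (∀ g ∈ gs, GBlock T φ g) → FinBlock T φ b →
    (∀ g ∈ gs', GBlock T φ g) → FinBlock T φ b' →
    (gs ++ [b]).flatten = (gs' ++ [b']).flatten → gs ++ [b] = gs' ++ [b'] := by
  intro gs
  induction gs with
  | nil =>
      intro b gs' b' _ hb hgs' hb' hflat
      cases gs' with
      | nil => simp_all
      | cons g' rest' =>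
          exfalso
          have hy : (rest' ++ [b']).flatten ≠ [] := by
            simp only [ne_eq, List.flatten_eq_nil_iff]
            intro h
            exact hb'.ne_nil T φ (h b' (by simp))
          have hprod : pp φ (rest' ++ [b']).flatten ∈ TT T := by
            refine TT_flatten T φ (by simp) ?_
            intro g hg
            rcases List.mem_append.1 hg with hg | hg
            · exact (hgs' g (by simp [hg])).1
            · simp at hg; subst hg; exact hb'.1
          have hsplit : b = g' ++ (rest' ++ [b']).flatten := by
            simpa using hflat
          exact hb.2 g' ((rest' ++ [b']).flatten) hy hsplit
            ⟨[g'], by simp, by simpa using hgs' g' (by simp), by simp⟩ hprod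
  | cons g rest ih =>
      intro b gs' b' hgs hb hgs' hb' hflat
      cases gs' with
      | nil =>
          exfalso
          have hy : (rest ++ [b]).flatten ≠ [] := by
            simp only [ne_eq, List.flatten_eq_nil_iff]
            intro h
            exact hb.ne_nil T φ (h b (by simp))
          have hprod : pp φ (rest ++ [b]).flatten ∈ TT T := by
            refine TT_flatten T φ (by simp) ?_
            intro x hx
            rcases List.mem_append.1 hx with hx | hx
            · exact (hgs x (by simp [hx])).1
            · simp at hx; subst hx; exact hb.1
          have hsplit : b' = g ++ (rest ++ [b]).flatten := by
            simpa using hflat.symm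
          exact hb'.2 g ((rest ++ [b]).flatten) hy hsplit
            ⟨[g], by simp, by simpa using hgs g (by simp), by simp⟩ hprod
      | cons g' rest' =>
          have hg : GBlock T φ g := hgs g (by simp)
          have hg' : GBlock T φ g' := hgs' g' (by simp)
          have heq : g = g' := by
            apply gblock_prefix_unique T φ hg hg'
            simpa using hflat
          subst heq
          have htail : (rest ++ [b]).flatten = (rest' ++ [b']).flatten := by
            have := hflat
            simp only [List.cons_append, List.flatten_cons] at this
            exact List.append_cancel_left this
          have := ih b rest' b' (fun x hx => hgs x (by simp [hx])) hb
            (fun x hx => hgs' x (by simp [hx])) hb' htail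
          simp [this]

/-- tail with no nonempty prefix having product in T. -/
def Stranded (t : List A) : Prop := ∀ j, 1 ≤ j → j ≤ t.length → pp φ (t.take j) ∉ TT T

/-- greedy decomposition existence. -/
lemma exists_dec_aux : ∀ n, ∀ u : List A, u.length ≤ n → ∃ (gs : List (List A)) (t : List A),
    (∀ g ∈ gs, GBlock T φ g) ∧ Stranded T φ t ∧ u = gs.flatten ++ t := by
  intro n
  induction n with
  | zero =>
      intro u hu
      have : u = [] := List.eq_nil_of_length_eq_zero (Nat.le_zero.1 hu)
      subst this
      exact ⟨[], [], by simp, fun j h1 h2 => by omega, by simp⟩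
  | succ n ih =>
      intro u hu
      by_cases h : ∃ j, 1 ≤ j ∧ j ≤ u.length ∧ pp φ (u.take j) ∈ TT T
      · classical
        have hex := h
        set j0 := Nat.find hex with hj0
        obtain ⟨hj01, hj0len, hj0T⟩ := Nat.find_spec hex
        have hmin : ∀ i, i < j0 → ¬(1 ≤ i ∧ i ≤ u.length ∧ pp φ (u.take i) ∈ TT T) :=
          fun i hi => Nat.find_min hex hi
        have hblock : GBlock T φ (u.take j0) := by
          constructor
          · exact hj0T
          · intro i h1 hilen
            rw [List.length_take] at hilen
            have hiu : i ≤ u.length := by omega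
            have hij : i < j0 := by omega
            have := hmin i hij
            rw [List.take_take, min_eq_left (le_of_lt hij)]
            intro hc
            exact this ⟨h1, hiu, hc⟩
        have hlen : (u.drop j0).length ≤ n := by
          rw [List.length_drop]; omega
        obtain ⟨gs, t, hgs, ht, heq⟩ := ih (u.drop j0) hlen
        refine ⟨u.take j0 :: gs, t, ?_, ht, ?_⟩
        · intro g hg
          rcases List.mem_cons.1 hg with hg | hg
          · subst hg; exact hblock
          · exact hgs g hg
        · simp only [List.flatten_cons, List.append_assoc, ← heq, List.take_append_drop]
      · push_neg at h
        exact ⟨[], u, by simp, fun j h1 h2 hT => h j h1 h2 hT, by simp⟩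

lemma exists_dec (u : List A) : ∃ (gs : List (List A)) (t : List A),
    (∀ g ∈ gs, GBlock T φ g) ∧ Stranded T φ t ∧ u = gs.flatten ++ t :=
  exists_dec_aux T φ u.length u le_rfl



section MarkovCtx
variable {L : Language A} {w₀ : List A}

lemma mem_ne_nil (hL : IsSgMarkovLang φ L) {w : List A} (hw : w ∈ L) : w ≠ [] := fun h => hL.not_empty_mem (h ▸ hw)

lemma L_unique (hL : IsSgMarkovLang φ L) {u v : List A} (hu : u ∈ L) (hv : v ∈ L) (h : pp φ u = pp φ v) : u = v := by
  obtain ⟨s, hs⟩ := pp_ne_nil_exists φ (mem_ne_nil φ hL hu)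
  have hu' : prodPlus φ u = some s := by rw [prodPlus_eq_pp]; exact hs
  have hv' : prodPlus φ v = some s := by rw [prodPlus_eq_pp, ← h]; exact hs
  obtain ⟨w, -, huniq⟩ := hL.unique_rep s
  rw [huniq u ⟨hu, hu'⟩, huniq v ⟨hv, hv'⟩]

lemma take_mem (hL : IsSgMarkovLang φ L) {w : List A} (hw : w ∈ L) {i : ℕ} (h1 : 1 ≤ i) (h2 : i ≤ w.length) :
    w.take i ∈ L := by
  rcases eq_or_lt_of_le h2 with heq | hlt
  · rwa [heq, List.take_length]
  · refine hL.plus_prefix_closed (w.take i) (w.drop i) ?_ ?_ (by rw [List.take_append_drop]; exact hw)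
    · intro h
      have := congrArg List.length h
      rw [List.length_take, List.length_nil] at this
      omega
    · intro h
      have := congrArg List.length h
      rw [List.length_drop, List.length_nil] at this
      omega

lemma pp_take_inj (hL : IsSgMarkovLang φ L) {w : List A} (hw : w ∈ L) {i i' : ℕ} (h1 : 1 ≤ i) (hii : i ≤ i')
    (h2 : i' ≤ w.length) (h : pp φ (w.take i) = pp φ (w.take i')) : i = i' := by
  have heq := L_unique φ hL (take_mem φ hL hw h1 (le_trans hii h2))
    (take_mem φ hL hw (le_trans h1 hii) h2) h
  have := congrArg List.length heq
  rw [List.length_take, List.length_take] at this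
  omega

lemma bad_val (F : Finset S) (hF : ∀ s : S, s ∉ T ↔ s ∈ F) {u : List A} (hne : u ≠ []) (hbad : pp φ u ∉ TT T) :
    ∃ s : S, pp φ u = (s : WithOne S) ∧ s ∈ F := by
  obtain ⟨s, hs⟩ := pp_ne_nil_exists φ hne
  refine ⟨s, hs, (hF s).1 ?_⟩
  intro hsT
  exact hbad (hs ▸ ⟨s, hsT, rfl⟩)

lemma seg_bound (hL : IsSgMarkovLang φ L) (F : Finset S) (hF : ∀ s : S, s ∉ T ↔ s ∈ F) {w : List A} (hw : w ∈ L) (c ℓ : ℕ) (hcl : c + ℓ ≤ w.length)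
    (hbad : ∀ j, 1 ≤ j → j ≤ ℓ → pp φ ((w.drop c).take j) ∉ TT T) : ℓ ≤ F.card := by
  classical
  rcases Nat.eq_zero_or_pos ℓ with rfl | hpos
  · exact Nat.zero_le _
  have takelen : ∀ j, j ≤ ℓ → ((w.drop c).take j).length = j := by
    intro j hj
    rw [List.length_take, List.length_drop]
    omega
  have hne : ∀ j, 1 ≤ j → j ≤ ℓ → (w.drop c).take j ≠ [] := by
    intro j h1 h2 h
    have := takelen j h2
    rw [h] at this; simp at this; omega
  have hexval : ∀ j, 1 ≤ j → j ≤ ℓ → ∃ s : S, pp φ ((w.drop c).take j) = (s : WithOne S) ∧ s ∈ F :=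
    fun j h1 h2 => bad_val T φ F hF (hne j h1 h2) (hbad j h1 h2)
  have hSne : Nonempty S := ⟨(hexval 1 le_rfl hpos).choose⟩
  set f : ℕ → S := fun j => if h : ∃ s : S, pp φ ((w.drop c).take j) = (s : WithOne S) ∧ s ∈ F
    then h.choose else Classical.arbitrary S with hfdef
  have hfspec : ∀ j, 1 ≤ j → j ≤ ℓ →
      pp φ ((w.drop c).take j) = (f j : WithOne S) ∧ f j ∈ F := by
    intro j h1 h2
    have h := hexval j h1 h2
    simp only [hfdef, dif_pos h]
    exact h.choose_spec
  have key : ∀ j, 1 ≤ j → j ≤ ℓ → ∀ j', 1 ≤ j' → j' ≤ ℓ → j ≤ j' → f j = f j' → j = j' := by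
    intro j h1 h2 j' h1' h2' hle hf
    have e1 := (hfspec j h1 h2).1
    have e2 := (hfspec j' h1' h2').1
    have : pp φ (w.take (c + j)) = pp φ (w.take (c + j')) := by
      rw [List.take_add, List.take_add, pp_append, pp_append, e1, e2, hf]
    have ha : 1 ≤ c + j := by omega
    have hb : c + j ≤ c + j' := by omega
    have hc : c + j' ≤ w.length := by omega
    have := pp_take_inj φ hL hw ha hb hc this
    omega
  have hinj : Set.InjOn f (Finset.Icc 1 ℓ) := by
    intro j hj j' hj' hf
    simp only [Finset.coe_Icc, Set.mem_Icc] at hj hj'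
    rcases le_total j j' with hle | hle
    · exact key j hj.1 hj.2 j' hj'.1 hj'.2 hle hf
    · exact (key j' hj'.1 hj'.2 j hj.1 hj.2 hle hf.symm).symm
  have := Finset.card_le_card_of_injOn f (fun j hj => by
    simp only [Finset.coe_Icc, Set.mem_Icc] at hj
    exact (hfspec j hj.1 hj.2).2) hinj
  simpa using this

lemma gblock_in_w_len (hL : IsSgMarkovLang φ L) (F : Finset S) (hF : ∀ s : S, s ∉ T ↔ s ∈ F)
    {w : List A} (hw : w ∈ L) {c : ℕ} {g r : List A} (h : w.drop c = g ++ r)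
    (hg : GBlock T φ g) : g.length ≤ F.card + 1 := by
  have hgne : g ≠ [] := hg.ne_nil T φ
  have hgpos : 1 ≤ g.length := List.length_pos_iff.2 hgne
  have hclen : c + (g.length + r.length) ≤ w.length := by
    have := congrArg List.length h
    rw [List.length_drop, List.length_append] at this
    omega
  have hseg := seg_bound T φ hL F hF hw c (g.length - 1) (by omega) ?_
  · omega
  · intro j h1 h2
    have : (w.drop c).take j = g.take j := by
      rw [h, List.take_append_of_le_length (by omega)]
    rw [this]
    exact hg.2 j h1 (by omega)

lemma stranded_in_w_len (hL : IsSgMarkovLang φ L) (F : Finset S) (hF : ∀ s : S, s ∉ T ↔ s ∈ F)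
    {w : List A} (hw : w ∈ L) {c : ℕ} {t : List A} (h : w.drop c = t)
    (ht : Stranded T φ t) : t.length ≤ F.card := by
  rcases eq_or_ne t [] with rfl | htne
  · simp
  have htpos : 1 ≤ t.length := List.length_pos_iff.2 htne
  have hclen : c + t.length ≤ w.length := by
    have := congrArg List.length h
    rw [List.length_drop] at this
    omega
  exact seg_bound T φ hL F hF hw c t.length hclen (fun j h1 h2 => by
    rw [h]; exact ht j h1 h2)

lemma offset_ex : ∀ (gs : List (List A)) (c : ℕ) (t : List A), w₀.drop c = gs.flatten ++ t →
    (∀ g ∈ gs, ∃ c' r, w₀.drop c' = g ++ r) ∧ ∃ c'', w₀.drop c'' = t := by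
  intro gs
  induction gs with
  | nil => exact fun c t h => ⟨by simp, c, by simpa using h⟩
  | cons g rest ih =>
      intro c t h
      have hrest : w₀.drop (c + g.length) = rest.flatten ++ t := by
        have : (w₀.drop c).drop g.length = rest.flatten ++ t := by
          rw [h, List.flatten_cons, List.append_assoc, List.drop_left]
        rwa [List.drop_drop] at this
      obtain ⟨h1, h2⟩ := ih (c + g.length) t hrest
      refine ⟨?_, h2⟩
      intro x hx
      rcases List.mem_cons.1 hx with rfl | hx
      · exact ⟨c, rest.flatten ++ t, by rw [h, List.flatten_cons, List.append_assoc]⟩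
      · exact h1 x hx

lemma bad_card {Q : Type} [Fintype Q] (M : DFA A Q) (hM : M.accepts = L)
    (hL : IsSgMarkovLang φ L) (F : Finset S) (hF : ∀ s : S, s ∉ T ↔ s ∈ F)
    {w : List A} (hw : w ∈ L) (bad : Finset ℕ)
    (hbadmem : ∀ p ∈ bad, p < w.length ∧ pp φ (w.drop p) ∉ TT T) :
    bad.card ≤ Fintype.card Q * F.card := by
  classical
  rcases Finset.eq_empty_or_nonempty bad with he | ⟨p₀, hp₀⟩
  · rw [he]; simp
  have hSne : Nonempty S := by
    obtain ⟨hp₀len, -⟩ := hbadmem p₀ hp₀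
    have hne : w.drop p₀ ≠ [] := by
      intro h
      have := congrArg List.length h
      rw [List.length_drop, List.length_nil] at this
      omega
    exact ⟨(pp_ne_nil_exists φ hne).choose⟩
  set f : ℕ → S := fun p => if h : ∃ s : S, pp φ (w.drop p) = (s : WithOne S) ∧ s ∈ F
    then h.choose else Classical.arbitrary S with hfdef
  have hfspec : ∀ p ∈ bad, pp φ (w.drop p) = (f p : WithOne S) ∧ f p ∈ F := by
    intro p hp
    obtain ⟨hplen, hpT⟩ := hbadmem p hp
    have hne : w.drop p ≠ [] := by
      intro h
      have := congrArg List.length h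
      rw [List.length_drop, List.length_nil] at this
      omega
    have h := bad_val T φ F hF hne hpT
    simp only [hfdef, dif_pos h]
    exact h.choose_spec
  have key : ∀ p ∈ bad, ∀ p' ∈ bad, p < p' →
      M.evalFrom M.start (w.take p) = M.evalFrom M.start (w.take p') → f p = f p' → False := by
    intro p hp p' hp' hlt hstate hval
    have hpr : p' < w.length := (hbadmem p' hp').1
    set w' := w.take p ++ w.drop p' with hw'
    have hwmem : w ∈ M.accepts := by rw [hM]; exact hw
    have hw'L : w' ∈ L := by
      rw [← hM]
      show M.eval w' ∈ M.accept
      have e1 : M.eval w' = M.evalFrom (M.evalFrom M.start (w.take p)) (w.drop p') :=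
        M.evalFrom_of_append M.start _ _
      have e2 : M.eval w = M.evalFrom (M.evalFrom M.start (w.take p')) (w.drop p') := by
        conv_lhs => rw [← List.take_append_drop p' w]
        exact M.evalFrom_of_append M.start _ _
      rw [e1, hstate, ← e2]
      exact hwmem
    have hppw' : pp φ w' = pp φ w := by
      have ep : pp φ w = pp φ (w.take p) * pp φ (w.drop p) := by
        conv_lhs => rw [← List.take_append_drop p w]
        exact pp_append φ _ _
      rw [hw', pp_append, (hfspec p' hp').1, ← hval, ← (hfspec p hp).1, ← ep]
    have := L_unique φ hL hw'L hw hppw'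
    have hlen := congrArg List.length this
    rw [hw', List.length_append, List.length_take, List.length_drop] at hlen
    omega
  -- injection into Q × F
  have hinj : Set.InjOn (fun p => (M.evalFrom M.start (w.take p), f p)) bad := by
    intro p hp p' hp' hpair
    simp only [Prod.mk.injEq] at hpair
    by_contra hne
    rcases Nat.lt_or_ge p p' with hlt | hge
    · exact key p hp p' hp' hlt hpair.1 hpair.2
    · have hlt : p' < p := by omega
      exact key p' hp' p hp hlt hpair.1.symm hpair.2.symm
  have hmaps : ∀ p ∈ bad, (M.evalFrom M.start (w.take p), f p) ∈
      (Finset.univ : Finset Q) ×ˢ F := by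
    intro p hp
    simp only [Finset.mem_product, Finset.mem_univ, true_and]
    exact (hfspec p hp).2
  have := Finset.card_le_card_of_injOn _ hmaps hinj
  simpa [Finset.card_product] using this

lemma sum_le_mul : ∀ (l : List ℕ) (n : ℕ), (∀ x ∈ l, x ≤ n) → l.sum ≤ l.length * n := by
  intro l n h
  induction l with
  | nil => simp
  | cons x l ih =>
      simp only [List.sum_cons, List.length_cons]
      have := ih (fun y hy => h y (by simp [hy]))
      have hx := h x (by simp)
      calc x + l.sum ≤ n + l.length * n := Nat.add_le_add hx this
        _ = (l.length + 1) * n := by ring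

lemma finblock_len {Q : Type} [Fintype Q] (M : DFA A Q) (hM : M.accepts = L)
    (hL : IsSgMarkovLang φ L) (F : Finset S) (hF : ∀ s : S, s ∉ T ↔ s ∈ F)
    {w : List A} (hw : w ∈ L) {c : ℕ} (hfb : FinBlock T φ (w.drop c)) :
    (w.drop c).length ≤ (Fintype.card Q * F.card + 1) * (F.card + 1) + F.card := by
  classical
  obtain ⟨gs, t, hgs, ht, heq⟩ := exists_dec T φ (w.drop c)
  set r := gs.length with hr
  set posLen : ℕ → ℕ := fun i => ((gs.take i).flatten).length with hposLen
  have hsplitflat : ∀ i, gs.flatten = (gs.take i).flatten ++ (gs.drop i).flatten := by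
    intro i
    rw [← List.flatten_append, List.take_append_drop]
  have habs : ∀ i, w.drop (c + posLen i) = (gs.drop i).flatten ++ t := by
    intro i
    have h1 : (w.drop c).drop (posLen i) = (gs.drop i).flatten ++ t := by
      rw [heq, hsplitflat i, List.append_assoc, List.drop_left]
    rw [← h1, List.drop_drop]
  have hstep : ∀ i, i < r → posLen i < posLen (i + 1) := by
    intro i hi
    have htake : gs.take (i+1) = gs.take i ++ [gs.get ⟨i, hi⟩] := by
      simp [List.take_succ]
    have hmem : gs.get ⟨i, hi⟩ ∈ gs := List.get_mem gs ⟨i, hi⟩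
    have hnn : gs.get ⟨i, hi⟩ ≠ [] := (hgs _ hmem).ne_nil T φ
    have : 0 < (gs.get ⟨i, hi⟩).length := List.length_pos_iff.2 hnn
    simp only [hposLen, htake, List.flatten_append, List.length_append, List.flatten_cons,
      List.flatten_nil, List.append_nil]
    omega
  have hchain : ∀ j, j ≤ r → ∀ i, i < j → posLen i < posLen j := by
    intro j
    induction j with
    | zero => omega
    | succ j ihj =>
        intro hj i hi
        rcases Nat.lt_or_ge i j with h | h
        · exact lt_trans (ihj (by omega) i h) (hstep j (by omega))
        · have : i = j := by omega
          subst this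
          exact hstep i (by omega)
  have hbadpos : ∀ i, i + 1 ≤ r → (gs.drop (i+1)).flatten ++ t ≠ [] →
      c + posLen (i+1) < w.length ∧ pp φ (w.drop (c + posLen (i+1))) ∉ TT T := by
    intro i hi hne
    have habs' := habs (i+1)
    have hne2 : w.drop (c + posLen (i+1)) ≠ [] := by rw [habs']; exact hne
    have hlenpos := List.length_pos_iff.2 hne2
    rw [List.length_drop] at hlenpos
    refine ⟨by omega, ?_⟩
    rw [habs']
    refine hfb.2 ((gs.take (i+1)).flatten) ((gs.drop (i+1)).flatten ++ t) hne ?_ ?_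
    · rw [heq, hsplitflat (i+1), List.append_assoc]
    · refine ⟨gs.take (i+1), ?_, fun g hg => hgs g (List.take_subset _ _ hg), rfl⟩
      intro htk
      have := congrArg List.length htk
      rw [List.length_take, List.length_nil] at this
      omega
  -- the count of blocks
  set m : ℕ := if t = [] then r - 1 else r with hm
  have hgood : ∀ i, i < m → i + 1 ≤ r ∧ (gs.drop (i+1)).flatten ++ t ≠ [] := by
    intro i hi
    rcases eq_or_ne t [] with rfl | htne
    · rw [hm, if_pos rfl] at hi
      refine ⟨by omega, ?_⟩
      have hdne : gs.drop (i+1) ≠ [] := by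
        intro h
        have := congrArg List.length h
        rw [List.length_drop, List.length_nil] at this
        omega
      obtain ⟨g, rest, hgr⟩ := List.exists_cons_of_ne_nil hdne
      have hgmem : g ∈ gs := by
        have : g ∈ gs.drop (i+1) := by rw [hgr]; simp
        exact List.drop_subset _ _ this
      have hgne : g ≠ [] := (hgs g hgmem).ne_nil T φ
      simp only [hgr, List.flatten_cons, List.append_nil, ne_eq, List.append_eq_nil_iff]
      intro hcon
      exact hgne hcon.1
    · rw [hm, if_neg htne] at hi
      exact ⟨by omega, fun h => htne (List.append_eq_nil_iff.1 h).2⟩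
  have hmr : m ≤ r := by
    rcases eq_or_ne t [] with rfl | htne
    · rw [hm, if_pos rfl]; omega
    · rw [hm, if_neg htne]
  have hrm : r ≤ m + 1 := by
    rcases eq_or_ne t [] with rfl | htne
    · rw [hm, if_pos rfl]; omega
    · rw [hm, if_neg htne]; omega
  -- count bad positions
  have hmQF : m ≤ Fintype.card Q * F.card := by
    set badF : Finset ℕ := (Finset.range m).image (fun i => c + posLen (i+1)) with hbadF
    have hcard : badF.card = m := by
      rw [hbadF, Finset.card_image_of_injOn, Finset.card_range]
      intro i hi j hj hij
      simp only [Finset.coe_range, Set.mem_Iio] at hi hj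
      simp only [] at hij
      by_contra hne
      rcases Nat.lt_or_ge i j with h | h
      · have := hchain (j+1) (by omega) (i+1) (by omega)
        omega
      · have hji : j < i := by omega
        have := hchain (i+1) (by omega) (j+1) (by omega)
        omega
    have := bad_card T φ M hM hL F hF hw badF ?_
    · omega
    · intro p hp
      simp only [hbadF, Finset.mem_image, Finset.mem_range] at hp
      obtain ⟨i, hi, rfl⟩ := hp
      exact hbadpos i (hgood i hi).1 (hgood i hi).2
  -- length bound
  have hlensum : (w.drop c).length = (gs.map List.length).sum + t.length := by
    rw [heq, List.length_append, List.length_flatten]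
  have hoff := offset_ex gs c t heq
  have hblocklen : ∀ g ∈ gs, g.length ≤ F.card + 1 := by
    intro g hg
    obtain ⟨c', rr, hc'⟩ := hoff.1 g hg
    exact gblock_in_w_len T φ hL F hF hw hc' (hgs g hg)
  have htlen : t.length ≤ F.card := by
    obtain ⟨c'', hc''⟩ := hoff.2
    exact stranded_in_w_len T φ hL F hF hw hc'' ht
  have hsum : (gs.map List.length).sum ≤ r * (F.card + 1) := by
    have := sum_le_mul (gs.map List.length) (F.card + 1) ?_
    · simpa [hr] using this
    · intro x hx
      obtain ⟨g, hg, rfl⟩ := List.mem_map.1 hx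
      exact hblocklen g hg
  have hrQF : r ≤ Fintype.card Q * F.card + 1 := by omega
  calc (w.drop c).length = (gs.map List.length).sum + t.length := hlensum
    _ ≤ r * (F.card + 1) + F.card := by omega
    _ ≤ (Fintype.card Q * F.card + 1) * (F.card + 1) + F.card := by
        have := Nat.mul_le_mul_right (F.card + 1) hrQF
        omega

lemma exists_blocks {Q : Type} [Fintype Q] (M : DFA A Q) (hM : M.accepts = L)
    (hL : IsSgMarkovLang φ L) (F : Finset S) (hF : ∀ s : S, s ∉ T ↔ s ∈ F)
    {w : List A} (hw : w ∈ L) :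
    ∀ n c, w.length - c ≤ n → pp φ (w.drop c) ∈ TT T →
    ∃ v : List (List A), (∃ gs b, v = gs ++ [b] ∧ (∀ g ∈ gs, GBlock T φ g) ∧ FinBlock T φ b) ∧
      v.flatten = w.drop c ∧
      ∀ x ∈ v, x.length ≤ (Fintype.card Q * F.card + 1) * (F.card + 1) + F.card ∧
        pp φ x ∈ TT T := by
  intro n
  induction n with
  | zero =>
      intro c hc hT
      exfalso
      have hne := ne_nil_of_pp_TT T φ hT
      have := List.length_pos_iff.2 hne
      rw [List.length_drop] at this
      omega
  | succ n ih =>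
      intro c hc hT
      by_cases hfb : FinBlock T φ (w.drop c)
      · refine ⟨[w.drop c], ⟨[], w.drop c, by simp, by simp, hfb⟩, by simp, ?_⟩
        intro x hx
        simp only [List.mem_singleton] at hx
        subst hx
        exact ⟨finblock_len T φ M hM hL F hF hw hfb, hT⟩
      · have hnot : ¬(∀ x y : List A, y ≠ [] → w.drop c = x ++ y → GStart T φ x →
            pp φ y ∉ TT T) := fun hcon => hfb ⟨hT, hcon⟩
        push_neg at hnot
        obtain ⟨x, y, hyne, hsplit, hgx, hyT⟩ := hnot
        obtain ⟨gsx, hgsxne, hgsxg, hgsxflat⟩ := hgx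
        have hxne : x ≠ [] := by
          intro hx0
          obtain ⟨g, rest, rfl⟩ := List.exists_cons_of_ne_nil hgsxne
          have : g = [] := by
            have := List.flatten_eq_nil_iff.1 (hgsxflat.trans hx0)
            exact this g (by simp)
          exact (hgsxg g (by simp)).ne_nil T φ this
        have hxpos : 1 ≤ x.length := List.length_pos_iff.2 hxne
        have hdropy : w.drop (c + x.length) = y := by
          have h1 : (w.drop c).drop x.length = y := by rw [hsplit, List.drop_left]
          rwa [List.drop_drop] at h1
        have hclen : c + x.length ≤ w.length := by
          have h1 := congrArg List.length hsplit
          rw [List.length_drop, List.length_append] at h1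
          have h2 := List.length_pos_iff.2 hyne
          omega
        have hrec := ih (c + x.length) (by omega) (by rw [hdropy]; exact hyT)
        obtain ⟨v, ⟨gs, b, rfl, hgsg, hb⟩, hflat, hbound⟩ := hrec
        refine ⟨gsx ++ (gs ++ [b]), ⟨gsx ++ gs, b, by rw [List.append_assoc], ?_, hb⟩, ?_, ?_⟩
        · intro g hg
          rcases List.mem_append.1 hg with hg | hg
          · exact hgsxg g hg
          · exact hgsg g hg
        · rw [List.flatten_append, hgsxflat, hflat, hdropy, ← hsplit]
        · intro z hz
          rcases List.mem_append.1 hz with hz | hz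
          · have hoff : w.drop c = gsx.flatten ++ y := by rw [hsplit, hgsxflat]
            obtain ⟨c', r', hc'⟩ := (offset_ex gsx c y hoff).1 z hz
            have hzlen := gblock_in_w_len T φ hL F hF hw hc' (hgsxg z hz)
            have hmul : 1 * (F.card + 1) ≤ (Fintype.card Q * F.card + 1) * (F.card + 1) :=
              Nat.mul_le_mul_right _ (by omega)
            exact ⟨by omega, (hgsxg z hz).1⟩
          · exact hbound z hz

end MarkovCtx

section Assemble
variable {S : Type} [Semigroup S]

theorem dirST (T : Subsemigroup S) (hfin : ((T : Set S)ᶜ).Finite) (h : SgMarkov S) :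
    SgMarkov ↥T := by
  classical
  obtain ⟨A, instA, φ, hsurj, L, hL⟩ := h
  obtain ⟨Q, instQ, M, hM⟩ := hL.regular
  set F : Finset S := hfin.toFinset with hFdef
  have hF : ∀ s : S, s ∉ T ↔ s ∈ F := by
    intro s
    rw [hFdef, Set.Finite.mem_toFinset]
    exact Iff.rfl
  set MM : ℕ := (Fintype.card Q * F.card + 1) * (F.card + 1) + F.card with hMM
  set BS : Set (List A) := {b | b.length ≤ MM ∧ pp φ b ∈ TT T} with hBS
  have hBSfin : BS.Finite := (List.finite_length_le A MM).subset (fun b hb => hb.1)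
  haveI instB : Fintype ↥BS := hBSfin.fintype
  have hmemTT : ∀ b : ↥BS, pp φ (b : List A) ∈ TT T := fun b => b.2.2
  set ψ : ↥BS → ↥T := fun b => ⟨(hmemTT b).choose, (hmemTT b).choose_spec.1⟩ with hψ
  have hψspec : ∀ b : ↥BS, ((ψ b : S) : WithOne S) = pp φ (b : List A) :=
    fun b => (hmemTT b).choose_spec.2
  set Φ : WithOne ↥T →* WithOne S := WithOne.mapMulHom (MulMemClass.subtype T) with hΦ
  have hprodmap : ∀ v : List ↥BS, Φ (pp ψ v) = pp φ ((v.map Subtype.val).flatten) := by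
    intro v
    induction v with
    | nil => simp [pp_nil]
    | cons b vtl ih =>
        rw [pp_cons, map_mul, ih, List.map_cons, List.flatten_cons, pp_append, WithOne.mapMulHom_coe]
        congr 1
        exact hψspec b
  set L' : Language ↥BS := {v | ((v.map Subtype.val).flatten ∈ L) ∧
      ∃ gs b, v.map Subtype.val = gs ++ [b] ∧ (∀ g ∈ gs, GBlock T φ g) ∧ FinBlock T φ b}
    with hL'def
  have hletter_ne : ∀ b : ↥BS, (b : List A) ≠ [] := fun b => ne_nil_of_pp_TT T φ (hmemTT b)
  have hflat_ne : ∀ v : List ↥BS, v ≠ [] → (v.map Subtype.val).flatten ≠ [] := by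
    intro v hv hcon
    obtain ⟨b, rest, rfl⟩ := List.exists_cons_of_ne_nil hv
    exact hletter_ne b (List.flatten_eq_nil_iff.1 hcon (b : List A) (by simp))
  -- unique representation
  have hrep : ∀ t : ↥T, ∃ v : List ↥BS, (v ∈ L' ∧ prodPlus ψ v = some t) ∧
      ∀ y : List ↥BS, (y ∈ L' ∧ prodPlus ψ y = some t) → y = v := by
    intro t
    obtain ⟨w, ⟨hwL, hwprod⟩, hwuniq⟩ := hL.unique_rep (t : S)
    have hwpp : pp φ w = ((t : S) : WithOne S) := by
      rw [← prodPlus_eq_pp, hwprod]; rfl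
    have hTT : pp φ (w.drop 0) ∈ TT T := by
      rw [List.drop_zero, hwpp]
      exact ⟨(t : S), t.2, rfl⟩
    obtain ⟨v, ⟨gs, b, hveq, hgsG, hbF⟩, hflat, hbound⟩ :=
      exists_blocks T φ M hM hL F hF hwL w.length 0 (by omega) hTT
    rw [List.drop_zero] at hflat
    have hlift : ∀ u : List (List A), (∀ x ∈ u, x ∈ BS) → ∃ uB : List ↥BS,
        uB.map Subtype.val = u := by
      intro u
      induction u with
      | nil => exact fun _ => ⟨[], rfl⟩
      | cons x u ih =>
          intro hmem
          obtain ⟨uB, huB⟩ := ih (fun y hy => hmem y (by simp [hy]))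
          exact ⟨⟨x, hmem x (by simp)⟩ :: uB, by simp [huB]⟩
    obtain ⟨vB, hvB⟩ := hlift v (fun x hx => ⟨(hbound x hx).1, (hbound x hx).2⟩)
    have hvBne : vB ≠ [] := by
      intro hcon
      rw [hcon] at hvB
      simp only [List.map_nil] at hvB
      rw [hveq] at hvB
      exact List.cons_ne_nil _ _ (List.append_eq_nil_iff.1 hvB.symm).2
    have hvBmem : vB ∈ L' := by
      refine ⟨by rw [hvB, hflat]; exact hwL, gs, b, by rw [hvB, hveq], hgsG, hbF⟩
    have hvBprod : prodPlus ψ vB = some t := by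
      obtain ⟨τ, hτ⟩ := pp_ne_nil_exists ψ hvBne
      have h1 : Φ (pp ψ vB) = ((t : S) : WithOne S) := by
        rw [hprodmap, hvB, hflat, hwpp]
      rw [hτ, WithOne.mapMulHom_coe] at h1
      have h2 : (τ : S) = (t : S) := WithOne.coe_inj.1 h1
      have h3 : τ = t := Subtype.ext h2
      rw [prodPlus_eq_pp, hτ, h3]
      rfl
    refine ⟨vB, ⟨hvBmem, hvBprod⟩, ?_⟩
    rintro y ⟨⟨hyL, gs', b', hyeq, hgsG', hbF'⟩, hyprod⟩
    have hyne : y ≠ [] := by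
      intro hcon
      rw [hcon] at hyeq
      exact List.cons_ne_nil _ _ (List.append_eq_nil_iff.1 hyeq.symm).2
    have hys : pp ψ y = ((t : ↥T) : WithOne ↥T) := by
      rw [← prodPlus_eq_pp, hyprod]; rfl
    have hyflat : pp φ ((y.map Subtype.val).flatten) = ((t : S) : WithOne S) := by
      rw [← hprodmap, hys, WithOne.mapMulHom_coe]
      rfl
    have hyw : (y.map Subtype.val).flatten = w :=
      L_unique φ hL hyL hwL (by rw [hyflat, hwpp])
    have hflatflat : (gs' ++ [b']).flatten = (gs ++ [b]).flatten := by
      rw [← hyeq, ← hveq, hyw, hflat]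
    have hsu := shape_unique T φ gs' b' gs b hgsG' hbF' hgsG hbF hflatflat
    have hmapeq : y.map Subtype.val = vB.map Subtype.val := by
      rw [hyeq, hvB, hveq, hsu]
    exact List.map_injective_iff.2 Subtype.val_injective hmapeq
  -- the DFA for L'
  set M' : DFA ↥BS (Q × Prop × Prop) :=
    { step := fun st b => (M.evalFrom st.1 (b : List A),
        st.2.1 ∧ GBlock T φ (b : List A), st.2.1 ∧ FinBlock T φ (b : List A)),
      start := (M.start, True, False),
      accept := {st | st.1 ∈ M.accept ∧ st.2.2} } with hM'
  have hev : ∀ v : List ↥BS, M'.evalFrom M'.start v =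
      (M.evalFrom M.start ((v.map Subtype.val).flatten),
       ∀ g ∈ v.map Subtype.val, GBlock T φ g,
       ∃ gs b, v.map Subtype.val = gs ++ [b] ∧ (∀ g ∈ gs, GBlock T φ g) ∧ FinBlock T φ b) := by
    intro v
    induction v using List.reverseRecOn with
    | nil =>
        show M'.start = _
        refine Prod.ext rfl (Prod.ext ?_ ?_)
        · show True = _
          rw [eq_iff_iff]
          simp
        · show False = _
          rw [eq_iff_iff]
          simp only [List.map_nil, false_iff]
          rintro ⟨gs, b, h, -⟩
          exact List.cons_ne_nil b [] (List.append_eq_nil_iff.1 h.symm).2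
    | append_singleton u b ih =>
        rw [DFA.evalFrom_append_singleton, ih]
        have hflatmap : ((u ++ [b]).map Subtype.val).flatten
            = (u.map Subtype.val).flatten ++ (b : List A) := by
          rw [List.map_append]
          simp
        refine Prod.ext ?_ (Prod.ext ?_ ?_)
        · show M.evalFrom (M.evalFrom M.start ((u.map Subtype.val).flatten)) (b : List A) = _
          rw [hflatmap, ← DFA.evalFrom_of_append]
        · show ((∀ g ∈ u.map Subtype.val, GBlock T φ g) ∧ GBlock T φ (b : List A)) = _
          rw [eq_iff_iff, List.map_append]
          constructor
          · rintro ⟨h1, h2⟩ g hg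
            rcases List.mem_append.1 hg with hg | hg
            · exact h1 g hg
            · simp only [List.map_cons, List.map_nil, List.mem_singleton] at hg
              subst hg
              exact h2
          · intro hall
            refine ⟨fun g hg => hall g (List.mem_append.2 (Or.inl hg)), ?_⟩
            exact hall _ (List.mem_append.2 (Or.inr (by simp)))
        · show ((∀ g ∈ u.map Subtype.val, GBlock T φ g) ∧ FinBlock T φ (b : List A)) = _
          rw [eq_iff_iff]
          constructor
          · rintro ⟨hall, hfin⟩
            exact ⟨u.map Subtype.val, (b : List A), by simp, hall, hfin⟩
          · rintro ⟨gs, b', heq, hall, hfin⟩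
            rw [List.map_append] at heq
            simp only [List.map_cons, List.map_nil] at heq
            have hinj := List.append_inj' heq (by simp)
            obtain ⟨h1, h2⟩ := hinj
            have hb' : b' = (b : List A) := by
              have := h2
              simp only [List.cons_eq_cons] at this
              exact this.1.symm
            subst h1
            rw [← hb']
            exact ⟨hall, hfin⟩
  have hreg : RegularLang L' := by
    refine ⟨Q × Prop × Prop, inferInstance, M', ?_⟩
    ext v
    show M'.evalFrom M'.start v ∈ M'.accept ↔ _
    rw [hev]
    constructor
    · rintro ⟨h1, h3⟩
      have hmem : (v.map Subtype.val).flatten ∈ M.accepts := h1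
      rw [hM] at hmem
      exact ⟨hmem, h3⟩
    · rintro ⟨h1, h3⟩
      rw [← hM] at h1
      exact ⟨h1, h3⟩
  have hNE : ([] : List ↥BS) ∉ L' := by
    rintro ⟨-, gs, b, h, -⟩
    simp only [List.map_nil] at h
    exact List.cons_ne_nil b [] (List.append_eq_nil_iff.1 h.symm).2
  have hPC : ∀ u v : List ↥BS, u ≠ [] → v ≠ [] → u ++ v ∈ L' → u ∈ L' := by
    rintro u v hu hv ⟨hmemL, gs, b, heq, hgsG, hbF⟩
    have hmap : u.map Subtype.val ++ v.map Subtype.val = gs ++ [b] := by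
      rw [← List.map_append, heq]
    have hlen : (u.map Subtype.val).length ≤ gs.length := by
      rw [List.length_map]
      have h1 := congrArg List.length hmap
      rw [List.length_append, List.length_append, List.length_map, List.length_map,
        List.length_singleton] at h1
      have hv1 : 1 ≤ v.length := List.length_pos_iff.2 hv
      omega
    have hsub : ∀ g ∈ u.map Subtype.val, g ∈ gs := by
      intro g hg
      have htake : u.map Subtype.val = (gs ++ [b]).take (u.map Subtype.val).length := by
        rw [← hmap, List.take_left]
      rw [List.take_append_of_le_length hlen] at htake
      rw [htake] at hg
      exact List.take_subset _ _ hg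
    have humne : u.map Subtype.val ≠ [] := by
      intro hcon
      have := congrArg List.length hcon
      rw [List.length_map, List.length_nil] at this
      exact hu (List.eq_nil_of_length_eq_zero this)
    refine ⟨?_, (u.map Subtype.val).dropLast, (u.map Subtype.val).getLast humne,
      (List.dropLast_append_getLast humne).symm, ?_, ?_⟩
    · apply hL.plus_prefix_closed _ ((v.map Subtype.val).flatten) (hflat_ne u hu) (hflat_ne v hv)
      rw [← List.flatten_append, ← List.map_append]
      exact hmemL
    · intro g hg
      exact hgsG g (hsub g (List.dropLast_subset _ hg))
    · exact gblock_finBlock T φ (hgsG _ (hsub _ (List.getLast_mem humne)))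
  refine ⟨↥BS, instB, ψ, ?_, L', hreg, hNE, hPC, ?_⟩
  · intro t
    obtain ⟨v, ⟨-, hp⟩, -⟩ := hrep t
    exact ⟨v, hp⟩
  · intro t
    obtain ⟨v, hv1, hv2⟩ := hrep t
    exact ⟨v, hv1, fun y hy => hv2 y hy⟩
theorem dirTS (T : Subsemigroup S) (hfin : ((T : Set S)ᶜ).Finite) (h : SgMarkov ↥T) :
    SgMarkov S := by
  classical
  obtain ⟨A, instA, ψ, hsurj, LT, hLT⟩ := h
  obtain ⟨Q, instQ, M, hM⟩ := hLT.regular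
  haveI instF : Fintype ↥((T : Set S)ᶜ) := hfin.fintype
  set φ : A ⊕ ↥((T : Set S)ᶜ) → S := Sum.elim (fun a => ((ψ a : S))) (fun f => (f : S)) with hφ
  set L' : Language (A ⊕ ↥((T : Set S)ᶜ)) :=
    {w | (∃ u ∈ LT, w = u.map Sum.inl) ∨ (∃ f, w = [Sum.inr f])} with hL'def
  set Φ : WithOne ↥T →* WithOne S := WithOne.mapMulHom (MulMemClass.subtype T) with hΦ
  have hmapprod : ∀ u : List A, pp φ (u.map Sum.inl) = Φ (pp ψ u) := by
    intro u
    induction u with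
    | nil => simp [pp_nil]
    | cons a u ih =>
        rw [List.map_cons, pp_cons, pp_cons, map_mul, ih, WithOne.mapMulHom_coe]
        rfl
  have hsingle : ∀ x : A ⊕ ↥((T : Set S)ᶜ), prodPlus φ [x] = some (φ x) := fun x => rfl
  -- unique representation
  have hrep : ∀ s : S, ∃ w, (w ∈ L' ∧ prodPlus φ w = some s) ∧
      ∀ y, (y ∈ L' ∧ prodPlus φ y = some s) → y = w := by
    intro s
    by_cases hs : s ∈ T
    · obtain ⟨u, ⟨huL, huprod⟩, huuniq⟩ := hLT.unique_rep ⟨s, hs⟩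
      have hune : u ≠ [] := fun hc => hLT.not_empty_mem (hc ▸ huL)
      have hupp : pp ψ u = ((⟨s, hs⟩ : ↥T) : WithOne ↥T) := by
        rw [← prodPlus_eq_pp, huprod]; rfl
      have hwprod : prodPlus φ (u.map Sum.inl) = some s := by
        rw [prodPlus_eq_pp, hmapprod, hupp, WithOne.mapMulHom_coe]
        rfl
      refine ⟨u.map Sum.inl, ⟨Or.inl ⟨u, huL, rfl⟩, hwprod⟩, ?_⟩
      rintro y ⟨hyL | hyL, hyprod⟩
      · obtain ⟨u', hu'L, rfl⟩ := hyL
        have hu'ne : u' ≠ [] := fun hc => hLT.not_empty_mem (hc ▸ hu'L)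
        obtain ⟨τ, hτ⟩ := pp_ne_nil_exists ψ hu'ne
        have h1 : pp φ (u'.map Sum.inl) = ((s : S) : WithOne S) := by
          rw [← prodPlus_eq_pp, hyprod]; rfl
        rw [hmapprod, hτ, WithOne.mapMulHom_coe] at h1
        have h2 : (τ : S) = s := WithOne.coe_inj.1 h1
        have h3 : τ = ⟨s, hs⟩ := Subtype.ext h2
        have : u' = u := huuniq u' ⟨hu'L, by rw [prodPlus_eq_pp, hτ, h3]; rfl⟩
        rw [this]
      · obtain ⟨f, rfl⟩ := hyL
        rw [hsingle] at hyprod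
        have : (f : S) = s := by
          have := hyprod
          simp only [hφ, Sum.elim_inr, Option.some.injEq] at this
          exact this
        exact absurd (this ▸ hs) f.2
    · refine ⟨[Sum.inr ⟨s, hs⟩], ⟨Or.inr ⟨⟨s, hs⟩, rfl⟩, hsingle _⟩, ?_⟩
      rintro y ⟨hyL | hyL, hyprod⟩
      · exfalso
        obtain ⟨u', hu'L, rfl⟩ := hyL
        have hu'ne : u' ≠ [] := fun hc => hLT.not_empty_mem (hc ▸ hu'L)
        obtain ⟨τ, hτ⟩ := pp_ne_nil_exists ψ hu'ne
        have h1 : pp φ (u'.map Sum.inl) = ((s : S) : WithOne S) := by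
          rw [← prodPlus_eq_pp, hyprod]; rfl
        rw [hmapprod, hτ, WithOne.mapMulHom_coe] at h1
        have h2 : (τ : S) = s := WithOne.coe_inj.1 h1
        exact hs (h2 ▸ τ.2)
      · obtain ⟨f, rfl⟩ := hyL
        rw [hsingle] at hyprod
        have h2 : (f : S) = s := by
          simp only [hφ, Sum.elim_inr, Option.some.injEq] at hyprod
          exact hyprod
        have : f = ⟨s, hs⟩ := Subtype.ext h2
        rw [this]
  -- regularity
  have hreg : RegularLang L' := by
    set M' : DFA (A ⊕ ↥((T : Set S)ᶜ)) (Q × Bool × Bool) :=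
      { step := fun st x => match x with
          | Sum.inl a => (M.step st.1 a, (true, st.2.2))
          | Sum.inr _ => (st.1, (st.2.1 || st.2.2, true)),
        start := (M.start, false, false),
        accept := {st | (st.2 = (true, false) ∧ st.1 ∈ M.accept) ∨ st.2 = (false, true)} }
      with hM'
    have hinl : ∀ (u : List A) (q : Q),
        M'.evalFrom (q, true, false) (u.map Sum.inl) = (M.evalFrom q u, true, false) := by
      intro u
      induction u with
      | nil => intro q; rfl
      | cons a u ih => intro q; exact ih (M.step q a)
    have hdead : ∀ (w : List (A ⊕ ↥((T : Set S)ᶜ))) (q : Q),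
        (M'.evalFrom (q, true, true) w).2 = (true, true) := by
      intro w
      induction w with
      | nil => intro q; rfl
      | cons x w ih =>
          intro q
          cases x with
          | inl a => exact ih (M.step q a)
          | inr f => exact ih q
    have hshape : ∀ w : List (A ⊕ ↥((T : Set S)ᶜ)), (∃ u : List A, w = u.map Sum.inl) ∨
        (∃ (u : List A) (f : ↥((T : Set S)ᶜ)) (rest : List (A ⊕ ↥((T : Set S)ᶜ))),
          w = u.map Sum.inl ++ Sum.inr f :: rest) := by
      intro w
      induction w with
      | nil => exact Or.inl ⟨[], rfl⟩
      | cons x w ih =>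
          cases x with
          | inl a =>
              rcases ih with ⟨u, rfl⟩ | ⟨u, f, rest, rfl⟩
              · exact Or.inl ⟨a :: u, rfl⟩
              · exact Or.inr ⟨a :: u, f, rest, rfl⟩
          | inr f => exact Or.inr ⟨[], f, w, rfl⟩
    refine ⟨Q × Bool × Bool, inferInstance, M', ?_⟩
    ext w
    show M'.evalFrom M'.start w ∈ M'.accept ↔ w ∈ L'
    rcases hshape w with ⟨u, rfl⟩ | ⟨u, f, rest, rfl⟩
    · cases u with
      | nil =>
          simp only [List.map_nil]
          constructor
          · rintro (⟨h1, -⟩ | h1) <;> simp_all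
          · rintro (⟨u', hu', hc⟩ | ⟨f, hc⟩)
            · have : u' = [] := by
                cases u' with
                | nil => rfl
                | cons a u' => exact absurd hc (by simp)
              exact absurd (this ▸ hu') hLT.not_empty_mem
            · exact absurd hc (by simp)
      | cons a u =>
          have heval : M'.evalFrom M'.start ((a :: u).map Sum.inl)
              = (M.evalFrom M.start (a :: u), true, false) := by
            show M'.evalFrom (M'.step M'.start (Sum.inl a)) (u.map Sum.inl) = _
            rw [show M'.step M'.start (Sum.inl a) = (M.step M.start a, true, false) from rfl,
              hinl]
            rfl
          rw [heval]
          constructor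
          · rintro (⟨-, h2⟩ | h2)
            · have : a :: u ∈ LT := by rw [← hM]; exact h2
              exact Or.inl ⟨a :: u, this, rfl⟩
            · exact absurd h2 (by simp)
          · rintro (⟨u', hu', hc⟩ | ⟨f, hc⟩)
            · have : u' = a :: u := by
                have := List.map_injective_iff.2 (fun x y hxy => Sum.inl.inj hxy) hc.symm
                exact this
              subst this
              refine Or.inl ⟨rfl, ?_⟩
              rw [← hM] at hu'
              exact hu'
            · exact absurd hc (by simp)
    · -- contains an inr letter
      cases u with
      | nil =>
          cases rest with
          | nil =>
              simp only [List.map_nil, List.nil_append]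
              constructor
              · intro _
                exact Or.inr ⟨f, rfl⟩
              · intro _
                exact Or.inr rfl
          | cons x rest =>
              have heval : (M'.evalFrom M'.start (List.map Sum.inl ([] : List A) ++ Sum.inr f :: x :: rest)).2
                  = (true, true) := by
                show (M'.evalFrom (M'.step (M'.step M'.start (Sum.inr f)) x) rest).2 = _
                cases x with
                | inl a => exact hdead rest _
                | inr g => exact hdead rest _
              constructor
              · intro hacc
                exfalso
                rcases hacc with ⟨h1, -⟩ | h1
                · rw [heval] at h1; simp at h1
                · rw [heval] at h1; simp at h1
              · rintro (⟨u', hu', hc⟩ | ⟨g, hc⟩)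
                · exfalso
                  cases u' with
                  | nil => simp at hc
                  | cons b u' => simp at hc
                · exfalso
                  simp at hc
      | cons a u =>
          have heval : (M'.evalFrom M'.start ((a :: u).map Sum.inl ++ Sum.inr f :: rest)).2
              = (true, true) := by
            rw [DFA.evalFrom_of_append]
            have h1 : M'.evalFrom M'.start ((a :: u).map Sum.inl)
                = (M.evalFrom M.start (a :: u), true, false) := by
              show M'.evalFrom (M'.step M'.start (Sum.inl a)) (u.map Sum.inl) = _
              rw [show M'.step M'.start (Sum.inl a) = (M.step M.start a, true, false) from rfl,
                hinl]
              rfl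
            rw [h1]
            show (M'.evalFrom (M'.step (M.evalFrom M.start (a :: u), true, false)
              (Sum.inr f)) rest).2 = _
            exact hdead rest _
          constructor
          · intro hacc
            exfalso
            rcases hacc with ⟨h1, -⟩ | h1
            · rw [heval] at h1; simp at h1
            · rw [heval] at h1; simp at h1
          · rintro (⟨u', hu', hc⟩ | ⟨g, hc⟩)
            · exfalso
              have : Sum.inr f ∈ u'.map Sum.inl := by
                rw [← hc]
                simp
              simp at this
            · exfalso
              have := congrArg List.length hc
              simp at this
  refine ⟨A ⊕ ↥((T : Set S)ᶜ), inferInstance, φ, ?_, L', hreg, ?_, ?_, ?_⟩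
  · intro s
    obtain ⟨w, ⟨-, hp⟩, -⟩ := hrep s
    exact ⟨w, hp⟩
  · -- not empty
    rintro (⟨u, hu, hc⟩ | ⟨f, hc⟩)
    · have : u = [] := by
        cases u with
        | nil => rfl
        | cons a u => exact absurd hc (by simp)
      exact hLT.not_empty_mem (this ▸ hu)
    · exact absurd hc (by simp)
  · -- prefix closed
    rintro u v hu hv (⟨u0, hu0, hc⟩ | ⟨f, hc⟩)
    · have hu1 : u = (u0.take u.length).map Sum.inl := by
        have := congrArg (List.take u.length) hc
        rw [List.take_left, ← List.map_take] at this
        exact this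
      have hv1 : v = (u0.drop u.length).map Sum.inl := by
        have := congrArg (List.drop u.length) hc
        rw [List.drop_left, ← List.map_drop] at this
        exact this
      have htne : u0.take u.length ≠ [] := by
        intro hcon
        rw [hcon] at hu1
        exact hu hu1
      have hdne : u0.drop u.length ≠ [] := by
        intro hcon
        rw [hcon] at hv1
        exact hv hv1
      have : u0.take u.length ∈ LT :=
        hLT.plus_prefix_closed _ _ htne hdne (by rw [List.take_append_drop]; exact hu0)
      exact Or.inl ⟨u0.take u.length, this, hu1⟩
    · exfalso
      have := congrArg List.length hc
      rw [List.length_append, List.length_singleton] at this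
      have h1 := List.length_pos_iff.2 hu
      have h2 := List.length_pos_iff.2 hv
      omega
  · -- unique rep
    intro s
    obtain ⟨w, hw1, hw2⟩ := hrep s
    exact ⟨w, hw1, fun y hy => hw2 y hy⟩
end Assemble
end Mk


/-- A subsemigroup of finite Rees index (finite complement) is Markov iff the ambient
semigroup is Markov. -/
theorem stmt19 {S : Type} [Semigroup S] (T : Subsemigroup S)
    (hfin : ((T : Set S)ᶜ).Finite) :
    SgMarkov T ↔ SgMarkov S :=
  ⟨fun h => Mk.dirTS T hfin h, fun h => Mk.dirST T hfin h⟩
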